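/- arXiv:1803.10968 — 2 statements merged into one kernel-verified Lean document; each statement's English description precedes it below -/
import Mathlib

section
/- Every point of the totally positive Grassmannian $Gr^{TP}(2,4)$ has a unique representative of the stated reduced row echelon form: if $A$ is a real $2\times 4$ matrix all of whose $2\times 2$ maximal minors are strictly positive, then there exists a unique invertible $2\times 2$ real matrix $g$ and unique positive reals $w_{13}, w_{14}, w_{23}, w_{24}$ such that $gA$ has rows $(1, 0, -w_{13}, -w_{13}(w_{14}+w_{24}))$ and $(0, 1, w_{23}, w_{23}w_{24})$. -/
/-- Maximal minor of a `2 × 4` real matrix formed by columns `i` and `j`. -/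
noncomputable def minor2 (A : Matrix (Fin 2) (Fin 4) ℝ) (i j : Fin 4) : ℝ :=
  Matrix.det !![A 0 i, A 0 j; A 1 i, A 1 j]

theorem stmt1 (A : Matrix (Fin 2) (Fin 4) ℝ)
    (hA : ∀ i j : Fin 4, i < j → 0 < minor2 A i j) :
    ∃! q : (GL (Fin 2) ℝ) × ℝ × ℝ × ℝ × ℝ,
      0 < q.2.1 ∧ 0 < q.2.2.1 ∧ 0 < q.2.2.2.1 ∧ 0 < q.2.2.2.2 ∧
      (q.1 : Matrix (Fin 2) (Fin 2) ℝ) * A =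
        !![1, 0, -q.2.1, -q.2.1 * (q.2.2.1 + q.2.2.2.2);
           0, 1, q.2.2.2.1, q.2.2.2.1 * q.2.2.2.2] := by
  have m : ∀ i j : Fin 4, i < j → 0 < A 0 i * A 1 j - A 0 j * A 1 i := by
    intro i j h
    have := hA i j h
    simpa [minor2, Matrix.det_fin_two_of] using this
  have d12 := m 0 1 (by decide)
  have d13 := m 0 2 (by decide)
  have d14 := m 0 3 (by decide)
  have d23 := m 1 2 (by decide)
  have d24 := m 1 3 (by decide)
  have d34 := m 2 3 (by decide)
  have h12 : A 0 0 * A 1 1 - A 0 1 * A 1 0 ≠ 0 := ne_of_gt d12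
  have h13 : A 0 0 * A 1 2 - A 0 2 * A 1 0 ≠ 0 := ne_of_gt d13
  have h23 : A 0 1 * A 1 2 - A 0 2 * A 1 1 ≠ 0 := ne_of_gt d23
  have h01_0 : A 1 1 * A 0 0 - A 0 1 * A 1 0 ≠ 0 := by intro h; apply h12; linarith
  have h01_1 : A 0 0 * A 1 1 - A 1 0 * A 0 1 ≠ 0 := by intro h; apply h12; linarith
  have h01_2 : A 1 1 * A 0 0 - A 1 0 * A 0 1 ≠ 0 := by intro h; apply h12; linarith
  have h02_0 : A 1 2 * A 0 0 - A 0 2 * A 1 0 ≠ 0 := by intro h; apply h13; linarith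
  have h02_1 : A 0 0 * A 1 2 - A 1 0 * A 0 2 ≠ 0 := by intro h; apply h13; linarith
  have h02_2 : A 1 2 * A 0 0 - A 1 0 * A 0 2 ≠ 0 := by intro h; apply h13; linarith
  have h12_0 : A 1 2 * A 0 1 - A 0 2 * A 1 1 ≠ 0 := by intro h; apply h23; linarith
  have h12_1 : A 0 1 * A 1 2 - A 1 1 * A 0 2 ≠ 0 := by intro h; apply h23; linarith
  have h12_2 : A 1 2 * A 0 1 - A 1 1 * A 0 2 ≠ 0 := by intro h; apply h23; linarith
  -- the inverse of the first-two-columns matrix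
  have hNM : (!![A 1 1 / (A 0 0 * A 1 1 - A 0 1 * A 1 0),
        -(A 0 1) / (A 0 0 * A 1 1 - A 0 1 * A 1 0);
        -(A 1 0) / (A 0 0 * A 1 1 - A 0 1 * A 1 0),
        A 0 0 / (A 0 0 * A 1 1 - A 0 1 * A 1 0)] : Matrix (Fin 2) (Fin 2) ℝ) *
      !![A 0 0, A 0 1; A 1 0, A 1 1] = 1 := by
    ext i j
    fin_cases i <;> fin_cases j <;>
      · simp [Matrix.mul_apply, Fin.sum_univ_two]
        field_simp
        ring
  have hMN : (!![A 0 0, A 0 1; A 1 0, A 1 1] : Matrix (Fin 2) (Fin 2) ℝ) *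
      !![A 1 1 / (A 0 0 * A 1 1 - A 0 1 * A 1 0),
        -(A 0 1) / (A 0 0 * A 1 1 - A 0 1 * A 1 0);
        -(A 1 0) / (A 0 0 * A 1 1 - A 0 1 * A 1 0),
        A 0 0 / (A 0 0 * A 1 1 - A 0 1 * A 1 0)] = 1 := by
    ext i j
    fin_cases i <;> fin_cases j <;>
      · simp [Matrix.mul_apply, Fin.sum_univ_two]
        field_simp
        ring
  refine ⟨⟨⟨_, _, hNM, hMN⟩,
      (A 0 1 * A 1 2 - A 0 2 * A 1 1) / (A 0 0 * A 1 1 - A 0 1 * A 1 0),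
      (A 0 0 * A 1 1 - A 0 1 * A 1 0) * (A 0 2 * A 1 3 - A 0 3 * A 1 2) /
        ((A 0 0 * A 1 2 - A 0 2 * A 1 0) * (A 0 1 * A 1 2 - A 0 2 * A 1 1)),
      (A 0 0 * A 1 2 - A 0 2 * A 1 0) / (A 0 0 * A 1 1 - A 0 1 * A 1 0),
      (A 0 0 * A 1 3 - A 0 3 * A 1 0) / (A 0 0 * A 1 2 - A 0 2 * A 1 0)⟩,
    ⟨div_pos d23 d12, div_pos (mul_pos d12 d34) (mul_pos d13 d23),
      div_pos d13 d12, div_pos d14 d13, ?_⟩, ?_⟩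
  · show (!![A 1 1 / (A 0 0 * A 1 1 - A 0 1 * A 1 0),
        -(A 0 1) / (A 0 0 * A 1 1 - A 0 1 * A 1 0);
        -(A 1 0) / (A 0 0 * A 1 1 - A 0 1 * A 1 0),
        A 0 0 / (A 0 0 * A 1 1 - A 0 1 * A 1 0)] : Matrix (Fin 2) (Fin 2) ℝ) * A = _
    ext i j
    fin_cases i <;> fin_cases j <;>
      · simp [Matrix.mul_apply, Fin.sum_univ_two]
        field_simp
        ring
  · rintro ⟨g, v13, v14, v23, v24⟩ ⟨p1, p2, p3, p4, heq⟩
    simp only at heq p1 p2 p3 p4 ⊢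
    have E00 := congrFun (congrFun heq 0) 0
    have E01 := congrFun (congrFun heq 0) 1
    have E02 := congrFun (congrFun heq 0) 2
    have E03 := congrFun (congrFun heq 0) 3
    have E10 := congrFun (congrFun heq 1) 0
    have E11 := congrFun (congrFun heq 1) 1
    have E12 := congrFun (congrFun heq 1) 2
    have E13 := congrFun (congrFun heq 1) 3
    simp [Matrix.mul_apply, Fin.sum_univ_two] at E00 E01 E02 E03 E10 E11 E12 E13
    set G : Matrix (Fin 2) (Fin 2) ℝ := (g : Matrix (Fin 2) (Fin 2) ℝ) with hG
    have hG00 : G 0 0 * (A 0 0 * A 1 1 - A 0 1 * A 1 0) = A 1 1 := by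
      linear_combination A 1 1 * E00 - A 1 0 * E01
    have hG01 : G 0 1 * (A 0 0 * A 1 1 - A 0 1 * A 1 0) = -(A 0 1) := by
      linear_combination A 0 0 * E01 - A 0 1 * E00
    have hG10 : G 1 0 * (A 0 0 * A 1 1 - A 0 1 * A 1 0) = -(A 1 0) := by
      linear_combination A 1 1 * E10 - A 1 0 * E11
    have hG11 : G 1 1 * (A 0 0 * A 1 1 - A 0 1 * A 1 0) = A 0 0 := by
      linear_combination A 0 0 * E11 - A 0 1 * E10
    have P13 : v13 * (A 0 0 * A 1 1 - A 0 1 * A 1 0) = A 0 1 * A 1 2 - A 0 2 * A 1 1 := by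
      linear_combination (A 0 0 * A 1 1 - A 0 1 * A 1 0) * E02 - A 0 2 * hG00 - A 1 2 * hG01
    have P23 : v23 * (A 0 0 * A 1 1 - A 0 1 * A 1 0) = A 0 0 * A 1 2 - A 0 2 * A 1 0 := by
      linear_combination -(A 0 0 * A 1 1 - A 0 1 * A 1 0) * E12 + A 0 2 * hG10 + A 1 2 * hG11
    have key : v23 * v24 * (A 0 0 * A 1 1 - A 0 1 * A 1 0) = A 0 0 * A 1 3 - A 0 3 * A 1 0 := by
      linear_combination -(A 0 0 * A 1 1 - A 0 1 * A 1 0) * E13 + A 0 3 * hG10 + A 1 3 * hG11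
    have key2 : v13 * (v14 + v24) * (A 0 0 * A 1 1 - A 0 1 * A 1 0)
        = A 0 1 * A 1 3 - A 0 3 * A 1 1 := by
      linear_combination (A 0 0 * A 1 1 - A 0 1 * A 1 0) * E03 - A 0 3 * hG00 - A 1 3 * hG01
    have hv13 : v13 = (A 0 1 * A 1 2 - A 0 2 * A 1 1) / (A 0 0 * A 1 1 - A 0 1 * A 1 0) := by
      rw [eq_div_iff h12]; exact P13
    have hv23 : v23 = (A 0 0 * A 1 2 - A 0 2 * A 1 0) / (A 0 0 * A 1 1 - A 0 1 * A 1 0) := by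
      rw [eq_div_iff h12]; exact P23
    have P24 : v24 * (A 0 0 * A 1 2 - A 0 2 * A 1 0) = A 0 0 * A 1 3 - A 0 3 * A 1 0 := by
      linear_combination key - v24 * P23
    have hv24 : v24 = (A 0 0 * A 1 3 - A 0 3 * A 1 0) / (A 0 0 * A 1 2 - A 0 2 * A 1 0) := by
      rw [eq_div_iff h13]; exact P24
    have hv14 : v14 = (A 0 0 * A 1 1 - A 0 1 * A 1 0) * (A 0 2 * A 1 3 - A 0 3 * A 1 2) /
        ((A 0 0 * A 1 2 - A 0 2 * A 1 0) * (A 0 1 * A 1 2 - A 0 2 * A 1 1)) := by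
      rw [eq_div_iff (mul_ne_zero h13 h23)]
      linear_combination (A 0 0 * A 1 2 - A 0 2 * A 1 0) * key2
        - (A 0 0 * A 1 2 - A 0 2 * A 1 0) * (v14 + v24) * P13
        - (A 0 1 * A 1 2 - A 0 2 * A 1 1) * P24
    have hGM : G * !![A 0 0, A 0 1; A 1 0, A 1 1] = 1 := by
      ext i j
      fin_cases i <;> fin_cases j <;>
        simp [Matrix.mul_apply, Fin.sum_univ_two, E00, E01, E10, E11]
    have hgval : G = !![A 1 1 / (A 0 0 * A 1 1 - A 0 1 * A 1 0),
        -(A 0 1) / (A 0 0 * A 1 1 - A 0 1 * A 1 0);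
        -(A 1 0) / (A 0 0 * A 1 1 - A 0 1 * A 1 0),
        A 0 0 / (A 0 0 * A 1 1 - A 0 1 * A 1 0)] := by
      calc G = G * (!![A 0 0, A 0 1; A 1 0, A 1 1] * _) := by rw [hMN, Matrix.mul_one]
        _ = (G * !![A 0 0, A 0 1; A 1 0, A 1 1]) * _ := by rw [Matrix.mul_assoc]
        _ = _ := by rw [hGM, Matrix.one_mul]
    have hg : g = (⟨_, _, hNM, hMN⟩ : GL (Fin 2) ℝ) := Units.ext hgval
    rw [Prod.ext_iff, Prod.ext_iff, Prod.ext_iff, Prod.ext_iff]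
    exact ⟨hg, hv13, hv14, hv23, hv24⟩
end

section
/- Let $\kappa_1 < \cdots < \kappa_n$ be real and let $A$ be a real $k\times n$ matrix of rank $k$ all of whose maximal minors are nonnegative. Then the tau function $\tau(x,y,t) = \sum_{1\le j_1<\cdots<j_k\le n} \Delta_{(j_1,\dots,j_k)}(A)\, \prod_{r<s}(\kappa_{j_s}-\kappa_{j_r})\, \prod_{l=1}^k \exp(\kappa_{j_l} x + \kappa_{j_l}^2 y + \kappa_{j_l}^3 t)$ is strictly positive for all real $(x,y,t)$. -/
open scoped BigOperators
open Matrix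

/-- A rank-`k` matrix with `k` rows has some nonzero maximal minor with increasing columns. -/
lemma exists_strictMono_det_ne_zero (k n : ℕ) (A : Matrix (Fin k) (Fin n) ℝ)
    (hrank : A.rank = k) :
    ∃ J : Fin k → Fin n, StrictMono J ∧
      Matrix.det (Matrix.of fun i l : Fin k => A i (J l)) ≠ 0 := by
  classical
  -- columns span ℝ^k
  have hspan : Submodule.span ℝ (Set.range Aᵀ) = ⊤ := by
    apply Submodule.eq_top_of_finrank_eq
    have := A.rank_eq_finrank_span_cols
    rw [hrank] at this
    simp
    exact this.symm
  obtain ⟨s, hsub, hsp, hli⟩ := exists_linearIndependent ℝ (Set.range Aᵀ)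
  rw [hspan] at hsp
  have hfin : s.Finite := hli.setFinite
  have : Fintype s := hfin.fintype
  -- s is a basis of ℝ^k
  let b : Module.Basis s ℝ (Fin k → ℝ) := Module.Basis.mk hli (by rw [Subtype.range_coe]; exact hsp.ge)
  have hcard : Fintype.card s = k := by
    have := Module.finrank_eq_card_basis b
    simpa using this.symm
  -- choose column indices
  have hchoose : ∀ v : s, ∃ j : Fin n, Aᵀ j = (v : Fin k → ℝ) := fun v => hsub v.2
  choose f hf using hchoose
  have hfinj : Function.Injective f := fun v w h => by
    apply Subtype.ext
    rw [← hf v, ← hf w, h]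
  let e : Fin k ≃ s := (Fintype.equivFinOfCardEq hcard).symm
  let J0 : Fin k → Fin n := f ∘ e
  have hJ0inj : Function.Injective J0 := hfinj.comp e.injective
  have hliJ0 : LinearIndependent ℝ (fun l => Aᵀ (J0 l)) := by
    have : (fun l => Aᵀ (J0 l)) = (fun v : s => (v : Fin k → ℝ)) ∘ e := by
      funext l; exact hf (e l)
    rw [this]
    exact hli.comp e e.injective
  -- the square submatrix with columns J0 has nonzero determinant
  have hdet0 : Matrix.det (Matrix.of fun i l : Fin k => A i (J0 l)) ≠ 0 := by
    have hU : IsUnit (Matrix.of fun i l : Fin k => A i (J0 l)) := by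
      rw [← Matrix.linearIndependent_cols_iff_isUnit]
      convert hliJ0 using 1
      all_goals rfl
    exact ((Matrix.isUnit_iff_isUnit_det _).mp hU).ne_zero
  -- sort the indices
  let s' : Finset (Fin n) := Finset.image J0 Finset.univ
  have hcard' : s'.card = k := by
    rw [Finset.card_image_of_injective _ hJ0inj, Finset.card_univ, Fintype.card_fin]
  let J : Fin k → Fin n := fun l => (s'.orderIsoOfFin hcard' l : Fin n)
  have hJmono : StrictMono J := fun a b hab => (s'.orderIsoOfFin hcard').strictMono hab
  -- J0 = J ∘ σ for a permutation σ
  have hmem : ∀ l : Fin k, J0 l ∈ s' := fun l => Finset.mem_image_of_mem _ (Finset.mem_univ l)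
  let σ : Fin k → Fin k := fun l => (s'.orderIsoOfFin hcard').symm ⟨J0 l, hmem l⟩
  have hJσ : ∀ l, J (σ l) = J0 l := fun l => by
    show ((s'.orderIsoOfFin hcard') ((s'.orderIsoOfFin hcard').symm ⟨J0 l, hmem l⟩) : Fin n) = J0 l
    rw [OrderIso.apply_symm_apply]
  have hσinj : Function.Injective σ := fun a b h => by
    apply hJ0inj
    rw [← hJσ a, ← hJσ b, h]
  let σe : Equiv.Perm (Fin k) := Equiv.ofBijective σ (Finite.injective_iff_bijective.mp hσinj)
  refine ⟨J, hJmono, fun h => hdet0 ?_⟩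
  have : (Matrix.of fun i l : Fin k => A i (J0 l)) =
      (Matrix.of fun i l : Fin k => A i (J l)).submatrix id σe := by
    ext i l
    simp [Matrix.submatrix, σe, ← hJσ l, Equiv.ofBijective]
  rw [this, Matrix.det_permute', h, mul_zero]

theorem stmt5 (k n : ℕ) (hkn : k ≤ n) (κ : Fin n → ℝ) (hκ : StrictMono κ)
    (A : Matrix (Fin k) (Fin n) ℝ) (hrank : A.rank = k)
    (hminors : ∀ J : Fin k → Fin n, (∀ a b : Fin k, a < b → J a < J b) →
      0 ≤ Matrix.det (Matrix.of fun i l : Fin k => A i (J l)))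
    (x y t : ℝ) :
    0 < ∑ J ∈ Finset.univ.filter
          (fun J : Fin k → Fin n => ∀ a b : Fin k, a < b → J a < J b),
        Matrix.det (Matrix.of fun i l : Fin k => A i (J l)) *
          (∏ p ∈ Finset.univ.filter (fun p : Fin k × Fin k => p.1 < p.2),
            (κ (J p.2) - κ (J p.1))) *
          ∏ l, Real.exp (κ (J l) * x + κ (J l) ^ 2 * y + κ (J l) ^ 3 * t) := by
  classical
  obtain ⟨J₀, hJ₀mono, hJ₀det⟩ := exists_strictMono_det_ne_zero k n A hrank
  have vand_pos : ∀ J : Fin k → Fin n, (∀ a b : Fin k, a < b → J a < J b) →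
      0 < ∏ p ∈ Finset.univ.filter (fun p : Fin k × Fin k => p.1 < p.2),
        (κ (J p.2) - κ (J p.1)) := by
    intro J hJ
    apply Finset.prod_pos
    intro p hp
    rw [Finset.mem_filter] at hp
    exact sub_pos.mpr (hκ (hJ p.1 p.2 hp.2))
  have exp_pos : ∀ J : Fin k → Fin n,
      0 < ∏ l, Real.exp (κ (J l) * x + κ (J l) ^ 2 * y + κ (J l) ^ 3 * t) :=
    fun J => Finset.prod_pos fun l _ => Real.exp_pos _
  apply Finset.sum_pos'
  · intro J hJ
    rw [Finset.mem_filter] at hJ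
    exact mul_nonneg (mul_nonneg (hminors J hJ.2) (vand_pos J hJ.2).le) (exp_pos J).le
  · refine ⟨J₀, Finset.mem_filter.mpr ⟨Finset.mem_univ _, fun a b h => hJ₀mono h⟩, ?_⟩
    have hdet_pos : 0 < Matrix.det (Matrix.of fun i l : Fin k => A i (J₀ l)) :=
      lt_of_le_of_ne (hminors J₀ fun a b h => hJ₀mono h) (Ne.symm hJ₀det)
    exact mul_pos (mul_pos hdet_pos (vand_pos J₀ fun a b h => hJ₀mono h)) (exp_pos J₀)
end
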